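/- arXiv:2107.01512 — 2 statements merged into one kernel-verified Lean document; each statement's English description precedes it below -/
import Mathlib

section
/- Let Φ be an irreducible root system not of type A, with highest root θ and i₀ the unique simple root index with (α_{i₀}, θ) ≠ 0. Then θ − α_{i₀} is a root, and every root β ∈ Φ with β ≠ θ satisfies β ≤ θ − α_{i₀} in the dominance order; in particular ⟨β, θ∨⟩ ≤ ⟨θ − α_{i₀}, θ∨⟩ = 1. -/
open scoped RealInnerProductSpace

/-- The pairing `⟨β, α∨⟩ = 2(β,α)/(α,α)`. -/
noncomputable def pairing {V : Type*} [NormedAddCommGroup V] [InnerProductSpace ℝ V]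
    (β α : V) : ℝ := 2 * ⟪β, α⟫ / ⟪α, α⟫

/-- A reduced crystallographic root system in a real inner product space,
equipped with a base (system of simple roots) `Δ` and the integer coefficients
of each root with respect to the base. -/
structure BasedRootSystem (ℓ : ℕ) (V : Type*) [NormedAddCommGroup V]
    [InnerProductSpace ℝ V] where
  Φ : Set V
  finite : Φ.Finite
  nonzero : ∀ α ∈ Φ, α ≠ 0
  spanning : Submodule.span ℝ Φ = ⊤
  crystallographic : ∀ α ∈ Φ, ∀ β ∈ Φ, ∃ n : ℤ, pairing β α = (n : ℝ)
  reflect_mem : ∀ α ∈ Φ, ∀ β ∈ Φ, β - pairing β α • α ∈ Φ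
  reduced : ∀ α ∈ Φ, ∀ t : ℝ, t • α ∈ Φ → t = 1 ∨ t = -1
  Δ : Fin ℓ → V
  Δ_mem : ∀ i, Δ i ∈ Φ
  Δ_indep : LinearIndependent ℝ Δ
  coeff : V → Fin ℓ → ℤ
  coeff_spec : ∀ α ∈ Φ, α = ∑ i, (coeff α i : ℝ) • Δ i
  coeff_sign : ∀ α ∈ Φ, (∀ i, 0 ≤ coeff α i) ∨ (∀ i, coeff α i ≤ 0)

section Aux

variable {ℓ : ℕ} {V : Type*} [NormedAddCommGroup V] [InnerProductSpace ℝ V]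

lemma my_pairing_self {α : V} (h : α ≠ 0) : pairing α α = 2 := by
  have : ⟪α, α⟫ ≠ 0 := inner_self_ne_zero.mpr h
  simp only [pairing]
  rw [mul_div_assoc, div_self this, mul_one]

lemma my_pairing_sub (x y α : V) : pairing (x - y) α = pairing x α - pairing y α := by
  simp only [pairing, inner_sub_left]
  ring

lemma my_strict_cs {β θ : V} (hβ : β ≠ 0) (hθ : θ ≠ 0) (hprop : ∀ r : ℝ, β ≠ r • θ) :
    ⟪β, θ⟫ * ⟪β, θ⟫ < ⟪β, β⟫ * ⟪θ, θ⟫ := by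
  rcases lt_or_eq_of_le (real_inner_mul_inner_self_le β θ) with h | h
  · exact h
  exfalso
  have hbn : (0:ℝ) < ‖β‖ := norm_pos_iff.mpr hβ
  have hθn : (0:ℝ) < ‖θ‖ := norm_pos_iff.mpr hθ
  rw [real_inner_self_eq_norm_sq, real_inner_self_eq_norm_sq] at h
  have key : |⟪θ, β⟫| = ‖θ‖ * ‖β‖ := by
    rw [← sq_eq_sq₀ (abs_nonneg _) (by positivity), sq_abs, real_inner_comm]
    nlinarith [h]
  have h1 : |⟪θ, β⟫ / (‖θ‖ * ‖β‖)| = 1 := by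
    rw [abs_div, key, abs_of_pos (by positivity), div_self (by positivity)]
  obtain ⟨-, r, -, hr⟩ := (abs_real_inner_div_norm_mul_norm_eq_one_iff θ β).mp h1
  exact hprop r hr

variable (R : BasedRootSystem ℓ V)

lemma my_coeff_unique {γ : V} (hγ : γ ∈ R.Φ) (c : Fin ℓ → ℝ)
    (hc : γ = ∑ i, c i • R.Δ i) : ∀ i, (R.coeff γ i : ℝ) = c i := by
  have h := R.coeff_spec γ hγ
  have hz : ∑ i, ((R.coeff γ i : ℝ) - c i) • R.Δ i = 0 := by
    simp only [sub_smul, Finset.sum_sub_distrib, ← h, ← hc, sub_self]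
  have h2 := Fintype.linearIndependent_iff.mp R.Δ_indep _ hz
  intro i
  have := h2 i
  linarith [this]

lemma my_neg_mem {α : V} (hα : α ∈ R.Φ) : -α ∈ R.Φ := by
  have h := R.reflect_mem α hα α hα
  rw [my_pairing_self (R.nonzero α hα)] at h
  have e : α - (2:ℝ) • α = -α := by module
  rwa [e] at h

lemma my_coeff_simple (j i : Fin ℓ) :
    R.coeff (R.Δ j) i = if i = j then 1 else 0 := by
  have h := my_coeff_unique R (R.Δ_mem j) (fun i => if i = j then 1 else 0)
    (by simp) i
  split_ifs at h ⊢ <;> exact_mod_cast h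

/-- roots with negative inner product which are not opposite add to a root -/
lemma my_add_mem {x y : V} (hx : x ∈ R.Φ) (hy : y ∈ R.Φ) (hxy : ⟪x, y⟫ < 0)
    (hne : x ≠ -y) : x + y ∈ R.Φ := by
  have hx0 := R.nonzero x hx
  have hy0 := R.nonzero y hy
  have hxx : (0:ℝ) < ⟪x, x⟫ := lt_of_le_of_ne real_inner_self_nonneg (Ne.symm (inner_self_ne_zero.mpr hx0))
  have hyy : (0:ℝ) < ⟪y, y⟫ := lt_of_le_of_ne real_inner_self_nonneg (Ne.symm (inner_self_ne_zero.mpr hy0))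
  have hprop : ∀ r : ℝ, x ≠ r • y := by
    intro r hr
    rcases R.reduced y hy r (hr ▸ hx) with h1 | h1
    · rw [hr, h1, one_smul] at hxy
      linarith
    · exact hne (by rw [hr, h1]; module)
  obtain ⟨n, hn⟩ := R.crystallographic y hy x hx
  obtain ⟨m, hm⟩ := R.crystallographic x hx y hy
  have hnneg : (n:ℝ) < 0 := by
    rw [← hn]
    exact div_neg_of_neg_of_pos (by linarith) hyy
  have hmneg : (m:ℝ) < 0 := by
    rw [← hm]
    exact div_neg_of_neg_of_pos (by rw [real_inner_comm]; linarith) hxx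
  have hn1 : n ≤ -1 := by have : n < 0 := by exact_mod_cast hnneg
                          omega
  have hm1 : m ≤ -1 := by have : m < 0 := by exact_mod_cast hmneg
                          omega
  have hcs := my_strict_cs hx0 hy0 hprop
  have hnm : (n:ℝ) * (m:ℝ) < 4 := by
    rw [← hn, ← hm]
    simp only [pairing]
    rw [div_mul_div_comm, div_lt_iff₀ (by positivity)]
    rw [real_inner_comm x y]
    nlinarith [hcs]
  have hnmz : n * m < 4 := by exact_mod_cast hnm
  by_cases h1 : n = -1
  · have h := R.reflect_mem y hy x hx
    rw [hn, h1] at h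
    have e : x - ((-1 : ℤ) : ℝ) • y = x + y := by push_cast; module
    rwa [e] at h
  · have hn2 : n ≤ -2 := by omega
    have hm1' : m = -1 := by nlinarith [mul_nonneg (by omega : (0:ℤ) ≤ -n - 2) (by omega : (0:ℤ) ≤ -m - 1)]
    have h := R.reflect_mem x hx y hy
    rw [hm, hm1'] at h
    have e : y - ((-1 : ℤ) : ℝ) • x = x + y := by push_cast; module
    rwa [e] at h

end Aux

namespace BasedRootSystem

variable {ℓ : ℕ} {V : Type*} [NormedAddCommGroup V] [InnerProductSpace ℝ V]

/-- A root is positive when all of its coefficients with respect to the base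
are nonnegative. -/
def IsPositive (R : BasedRootSystem ℓ V) (α : V) : Prop :=
  α ∈ R.Φ ∧ ∀ i, 0 ≤ R.coeff α i

/-- The highest root: the (unique) maximal root in the dominance order, i.e. its
coefficients dominate the coefficients of every root. -/
def IsHighestRoot (R : BasedRootSystem ℓ V) (θ : V) : Prop :=
  θ ∈ R.Φ ∧ ∀ β ∈ R.Φ, ∀ i, R.coeff β i ≤ R.coeff θ i

/-- Irreducibility: the set of roots admits no nontrivial orthogonal partition. -/
def IsIrreducible (R : BasedRootSystem ℓ V) : Prop :=
  ∀ S ⊆ R.Φ, (∀ α ∈ S, ∀ β ∈ R.Φ, β ∉ S → ⟪α, β⟫ = 0) → S = ∅ ∨ S = R.Φ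

end BasedRootSystem

/-- The root system is of type `A_ℓ` when, after permuting the simple roots, its
Cartan matrix is the Cartan matrix of type `A_ℓ`. -/
def BasedRootSystem.IsTypeA {ℓ : ℕ} {V : Type*} [NormedAddCommGroup V]
    [InnerProductSpace ℝ V] (R : BasedRootSystem ℓ V) : Prop :=
  ∃ σ : Equiv.Perm (Fin ℓ), ∀ i j : Fin ℓ,
    pairing (R.Δ (σ i)) (R.Δ (σ j)) =
      if i = j then 2
      else if (i : ℕ) + 1 = (j : ℕ) ∨ (j : ℕ) + 1 = (i : ℕ) then -1 else 0

/-- If the root system is irreducible and not of type `A`, `θ` is the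
highest root and `α_{i₀}` is the unique simple root with `(α_{i₀}, θ) ≠ 0`, then
`θ − α_{i₀}` is a root, every root `β ≠ θ` satisfies `β ≤ θ − α_{i₀}` in the
dominance order, and in particular `⟨β, θ∨⟩ ≤ ⟨θ − α_{i₀}, θ∨⟩ = 1`. -/
theorem root_le_highest_sub_simple {ℓ : ℕ} {V : Type*} [NormedAddCommGroup V]
    [InnerProductSpace ℝ V] (R : BasedRootSystem ℓ V) (hirr : R.IsIrreducible)
    (hA : ¬ R.IsTypeA) (θ : V) (hθ : R.IsHighestRoot θ)
    (i₀ : Fin ℓ) (hi₀ : ⟪R.Δ i₀, θ⟫ ≠ 0)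
    (huniq : ∀ i : Fin ℓ, ⟪R.Δ i, θ⟫ ≠ 0 → i = i₀) :
    θ - R.Δ i₀ ∈ R.Φ ∧
    (∀ β ∈ R.Φ, β ≠ θ → ∀ i : Fin ℓ, R.coeff β i ≤ R.coeff (θ - R.Δ i₀) i) ∧
    pairing (θ - R.Δ i₀) θ = 1 ∧
    (∀ β ∈ R.Φ, β ≠ θ → pairing β θ ≤ 1) := by
  obtain ⟨hθΦ, hmax⟩ := hθ
  have hθ0 : θ ≠ 0 := R.nonzero θ hθΦ
  have hθθ : (0:ℝ) < ⟪θ, θ⟫ :=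
    lt_of_le_of_ne real_inner_self_nonneg (Ne.symm (inner_self_ne_zero.mpr hθ0))
  have hθc : ∀ i, 1 ≤ R.coeff θ i := by
    intro i
    have h := hmax (R.Δ i) (R.Δ_mem i) i
    rw [my_coeff_simple R i i, if_pos rfl] at h
    exact h
  have hcontra : ∀ β ∈ R.Φ, β ≠ θ → (2:ℝ) • θ - β ∉ R.Φ := by
    intro β hβ hne hmem
    have hc : ∀ i, (R.coeff ((2:ℝ) • θ - β) i : ℝ) =
        2 * (R.coeff θ i : ℝ) - (R.coeff β i : ℝ) := by
      apply my_coeff_unique R hmem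
      conv_lhs => rw [R.coeff_spec θ hθΦ, R.coeff_spec β hβ]
      rw [Finset.smul_sum, ← Finset.sum_sub_distrib]
      exact Finset.sum_congr rfl fun i _ => by module
    have hβθ : ∀ i, R.coeff β i = R.coeff θ i := by
      intro i
      have h1 := hmax _ hmem i
      have h2 := hmax β hβ i
      have h3 : R.coeff ((2:ℝ) • θ - β) i = 2 * R.coeff θ i - R.coeff β i := by
        exact_mod_cast hc i
      omega
    apply hne
    rw [R.coeff_spec β hβ, R.coeff_spec θ hθΦ]
    exact Finset.sum_congr rfl fun i _ => by rw [hβθ i]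
  have key : ∀ β ∈ R.Φ, β ≠ θ → pairing β θ ≤ 1 := by
    intro β hβ hne
    by_contra hgt
    push_neg at hgt
    obtain ⟨n, hn⟩ := R.crystallographic θ hθΦ β hβ
    have hn2 : 2 ≤ n := by
      have h1 : (1:ℝ) < n := by rw [← hn]; exact hgt
      have : 1 < n := by exact_mod_cast h1
      omega
    have hβθpos : 0 < ⟪β, θ⟫ := by
      have hp1 : 1 < 2 * ⟪β, θ⟫ / ⟪θ, θ⟫ := hgt
      rw [lt_div_iff₀ hθθ] at hp1
      linarith
    have hprop : ∀ r : ℝ, β ≠ r • θ := by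
      intro r hr
      rcases R.reduced θ hθΦ r (hr ▸ hβ) with h1 | h1
      · exact hne (by rw [hr, h1, one_smul])
      · rw [hr, h1, neg_one_smul, inner_neg_left] at hβθpos
        linarith
    rcases eq_or_lt_of_le hn2 with h2 | h3
    · have h := R.reflect_mem θ hθΦ β hβ
      rw [hn, ← h2] at h
      have h' := my_neg_mem R h
      have e : -(β - ((2:ℤ):ℝ) • θ) = (2:ℝ) • θ - β := by push_cast; module
      rw [e] at h'
      exact hcontra β hβ hne h'
    · obtain ⟨m, hm⟩ := R.crystallographic β hβ θ hθΦ
      have hββ : (0:ℝ) < ⟪β, β⟫ :=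
        lt_of_le_of_ne real_inner_self_nonneg (Ne.symm (inner_self_ne_zero.mpr (R.nonzero β hβ)))
      have hm1 : 1 ≤ m := by
        have h1 : (0:ℝ) < m := by
          rw [← hm]
          apply div_pos _ hββ
          rw [real_inner_comm]; linarith
        have : 0 < m := by exact_mod_cast h1
        omega
      have hcs := my_strict_cs (R.nonzero β hβ) hθ0 hprop
      have hnm : (n:ℝ) * (m:ℝ) < 4 := by
        rw [← hn, ← hm]
        simp only [pairing]
        rw [div_mul_div_comm, div_lt_iff₀ (by positivity)]
        nlinarith [hcs, real_inner_comm θ β]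
      have hnmz : n * m < 4 := by exact_mod_cast hnm
      have hm1' : m = 1 := by
        nlinarith [mul_nonneg (by omega : (0:ℤ) ≤ n - 3) (by omega : (0:ℤ) ≤ m - 1)]
      have h := R.reflect_mem β hβ θ hθΦ
      rw [hm, hm1'] at h
      have hγ : θ - β ∈ R.Φ := by
        have e : θ - ((1:ℤ):ℝ) • β = θ - β := by push_cast; module
        rwa [e] at h
      have hip : ⟪θ - β, θ⟫ < 0 := by
        rw [inner_sub_left]
        have h3' : (3:ℝ) ≤ n := by exact_mod_cast (by omega : (3:ℤ) ≤ n)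
        have hd : 2 * ⟪β, θ⟫ / ⟪θ, θ⟫ = (n:ℝ) := hn
        rw [div_eq_iff (ne_of_gt hθθ)] at hd
        nlinarith
      have hne' : θ - β ≠ -θ := by
        intro h'
        have hb2 : β = (2:ℝ) • θ := by
          have h'' := congrArg (fun v => v + β + θ) h'
          rw [show θ - β + β + θ = (2:ℝ) • θ by module] at h''
          rw [show -θ + β + θ = β by module] at h''
          exact h''.symm
        rcases R.reduced θ hθΦ 2 (hb2 ▸ hβ) with h'' | h'' <;> norm_num at h''
      have hsum := my_add_mem R hγ hθΦ hip hne'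
      rw [show (θ - β) + θ = (2:ℝ) • θ - β by module] at hsum
      exact hcontra β hβ hne hsum
  have horth : ∀ i, i ≠ i₀ → ⟪R.Δ i, θ⟫ = 0 := by
    intro i h
    by_contra hne
    exact h (huniq i hne)
  have hi₀pos : 0 < ⟪R.Δ i₀, θ⟫ := by
    rcases lt_trichotomy (⟪R.Δ i₀, θ⟫ : ℝ) 0 with hlt | hz | hpos
    · exfalso
      have hne' : R.Δ i₀ ≠ -θ := by
        intro h'
        have hθeq : θ = -R.Δ i₀ := by rw [h']; module
        have hc := my_coeff_unique R hθΦ (fun i => -(if i = i₀ then (1:ℝ) else 0))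
          (by rw [hθeq]; simp)
        have h2 := hc i₀
        simp only [if_pos rfl] at h2
        have h3 : R.coeff θ i₀ = -1 := by exact_mod_cast h2
        have := hθc i₀
        omega
      have hsum := my_add_mem R (R.Δ_mem i₀) hθΦ hlt hne'
      have hc := my_coeff_unique R hsum
        (fun i => (if i = i₀ then (1:ℝ) else 0) + (R.coeff θ i : ℝ))
        (by
          conv_lhs => rw [R.coeff_spec θ hθΦ]
          simp only [add_smul, Finset.sum_add_distrib]
          congr 1
          simp)
      have h1 := hmax _ hsum i₀
      have h2 := hc i₀
      simp only [if_pos rfl] at h2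
      have h3 : R.coeff (R.Δ i₀ + θ) i₀ = 1 + R.coeff θ i₀ := by exact_mod_cast h2
      omega
    · exact absurd hz hi₀
    · exact hpos
  have hθne : R.Δ i₀ ≠ θ := by
    intro h
    rcases Nat.lt_or_ge ℓ 2 with hl | hl
    · apply hA
      refine ⟨Equiv.refl _, fun i j => ?_⟩
      have hij : i = j := by
        apply Fin.ext
        have := i.2; have := j.2; omega
      subst hij
      simp [my_pairing_self (R.nonzero _ (R.Δ_mem _))]
    · have hj : ∃ j : Fin ℓ, j ≠ i₀ := by
        by_cases h0 : i₀.1 = 0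
        · exact ⟨⟨1, by omega⟩, fun hj => by
            have := congrArg Fin.val hj; simp at this; omega⟩
        · exact ⟨⟨0, by omega⟩, fun hj => by
            have := congrArg Fin.val hj; simp at this; omega⟩
      obtain ⟨j, hjne⟩ := hj
      have h1 := hθc j
      rw [← h, my_coeff_simple R i₀ j, if_neg hjne] at h1
      omega
  have hp1 : pairing (R.Δ i₀) θ = 1 := by
    obtain ⟨n, hn⟩ := R.crystallographic θ hθΦ (R.Δ i₀) (R.Δ_mem i₀)
    have hle := key _ (R.Δ_mem i₀) hθne
    have hpos : (0:ℝ) < 2 * ⟪R.Δ i₀, θ⟫ / ⟪θ, θ⟫ := div_pos (by linarith) hθθ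
    have hpos' : 0 < pairing (R.Δ i₀) θ := hpos
    rw [hn] at hle hpos' ⊢
    have h1 : 0 < n := by exact_mod_cast hpos'
    have h2 : n ≤ 1 := by exact_mod_cast hle
    have : n = 1 := by omega
    rw [this]; norm_num
  have hroot : θ - R.Δ i₀ ∈ R.Φ := by
    have h := R.reflect_mem θ hθΦ (R.Δ i₀) (R.Δ_mem i₀)
    rw [hp1, one_smul] at h
    have h' := my_neg_mem R h
    rwa [show -(R.Δ i₀ - θ) = θ - R.Δ i₀ by module] at h'
  have hcθ : ∀ i, R.coeff (θ - R.Δ i₀) i = R.coeff θ i - (if i = i₀ then 1 else 0) := by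
    intro i
    have hc := my_coeff_unique R hroot
      (fun i => (R.coeff θ i : ℝ) - (if i = i₀ then 1 else 0))
      (by
        conv_lhs => rw [R.coeff_spec θ hθΦ]
        simp only [sub_smul, Finset.sum_sub_distrib]
        congr 1
        simp) i
    split_ifs at hc ⊢ <;> exact_mod_cast hc
  have hp3 : pairing (θ - R.Δ i₀) θ = 1 := by
    rw [my_pairing_sub, my_pairing_self hθ0, hp1]; norm_num
  refine ⟨hroot, ?_, hp3, key⟩
  intro β hβ hne i
  rw [hcθ i]
  by_cases hi : i = i₀
  · rw [if_pos hi]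
    subst hi
    rcases lt_or_eq_of_le (hmax β hβ i) with h | h
    · omega
    · exfalso
      have e : θ - β = ∑ j, ((R.coeff θ j : ℝ) - (R.coeff β j : ℝ)) • R.Δ j := by
        conv_lhs => rw [R.coeff_spec θ hθΦ, R.coeff_spec β hβ]
        simp only [sub_smul, Finset.sum_sub_distrib]
      have hz : ⟪θ - β, θ⟫ = 0 := by
        rw [e, sum_inner]
        apply Finset.sum_eq_zero
        intro j _
        rw [real_inner_smul_left]
        by_cases hj : j = i
        · subst hj
          rw [h]
          simp
        · rw [horth j hj, mul_zero]
      rw [inner_sub_left] at hz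
      have hp2 : pairing β θ = 2 := by
        show 2 * ⟪β, θ⟫ / ⟪θ, θ⟫ = 2
        rw [show ⟪β, θ⟫ = ⟪θ, θ⟫ by linarith]
        field_simp
      have hk := key β hβ hne
      rw [hp2] at hk
      linarith
  · rw [if_neg hi]
    have := hmax β hβ i
    omega
end

section
/- Let V be a finite-dimensional vector space over an infinite field and let Z ⊆ V be a subset spanning V that is a cone (closed under scalar multiplication) and is irreducible in the Zariski topology. If φ : V → V is a linear endomorphism such that φ(z) ∈ span{z} for every z ∈ Z, then φ is a scalar multiple of the identity. -/
/-- The algebra of polynomial functions on a vector space `V` over `k`: the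
subalgebra of `V → k` generated by the linear functionals. -/
noncomputable def polyFunctions (k V : Type*) [Field k] [AddCommGroup V]
    [Module k V] : Subalgebra k (V → k) :=
  Algebra.adjoin k {f : V → k | ∃ g : V →ₗ[k] k, f = ⇑g}

/-- A subset of `V` is Zariski closed when it is the common zero locus of a set of
polynomial functions on `V`. -/
def IsZariskiClosed (k : Type*) {V : Type*} [Field k] [AddCommGroup V] [Module k V]
    (C : Set V) : Prop :=
  ∃ S : Set (V → k), (∀ f ∈ S, f ∈ polyFunctions k V) ∧
    C = {x : V | ∀ f ∈ S, f x = 0}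

/-- A subset `Z ⊆ V` is irreducible in the Zariski topology when it is nonempty and
whenever it is covered by two Zariski closed sets it is contained in one of them. -/
def IsZariskiIrreducible (k : Type*) {V : Type*} [Field k] [AddCommGroup V]
    [Module k V] (Z : Set V) : Prop :=
  Z.Nonempty ∧ ∀ C₁ C₂ : Set V, IsZariskiClosed k C₁ → IsZariskiClosed k C₂ →
    Z ⊆ C₁ ∪ C₂ → Z ⊆ C₁ ∨ Z ⊆ C₂

/-- The kernel of a linear endomorphism is Zariski closed. -/
lemma isZariskiClosed_ker {k V : Type*} [Field k] [AddCommGroup V] [Module k V]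
    (ψ : V →ₗ[k] V) : IsZariskiClosed k {x : V | ψ x = 0} := by
  refine ⟨{f : V → k | ∃ g : Module.Dual k V, f = ⇑(g.comp ψ)}, ?_, ?_⟩
  · rintro f ⟨g, rfl⟩
    exact Algebra.subset_adjoin ⟨g.comp ψ, rfl⟩
  · ext x
    simp only [Set.mem_setOf_eq]
    constructor
    · rintro h f ⟨g, rfl⟩
      simp [h]
    · intro h
      rw [← Module.forall_dual_apply_eq_zero_iff k (ψ x)]
      intro g
      exact h _ ⟨g, rfl⟩

/-- The empty set is Zariski closed. -/
lemma isZariskiClosed_empty {k V : Type*} [Field k] [AddCommGroup V] [Module k V] :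
    IsZariskiClosed k (∅ : Set V) := by
  refine ⟨{fun _ => (1 : k)}, ?_, ?_⟩
  · rintro f rfl
    exact (polyFunctions k V).one_mem
  · ext x
    simp

/-- The union of two Zariski closed sets is Zariski closed. -/
lemma IsZariskiClosed.union {k V : Type*} [Field k] [AddCommGroup V] [Module k V]
    {C₁ C₂ : Set V} (h₁ : IsZariskiClosed k C₁) (h₂ : IsZariskiClosed k C₂) :
    IsZariskiClosed k (C₁ ∪ C₂) := by
  obtain ⟨S₁, hS₁, rfl⟩ := h₁
  obtain ⟨S₂, hS₂, rfl⟩ := h₂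
  refine ⟨{h : V → k | ∃ f ∈ S₁, ∃ g ∈ S₂, h = f * g}, ?_, ?_⟩
  · rintro h ⟨f, hf, g, hg, rfl⟩
    exact (polyFunctions k V).mul_mem (hS₁ f hf) (hS₂ g hg)
  · ext x
    simp only [Set.mem_union, Set.mem_setOf_eq]
    constructor
    · rintro (h | h) p ⟨f, hf, g, hg, rfl⟩
      · simp [Pi.mul_apply, h f hf]
      · simp [Pi.mul_apply, h g hg]
    · intro h
      by_contra hc
      push_neg at hc
      obtain ⟨⟨f, hf, hfx⟩, ⟨g, hg, hgx⟩⟩ := hc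
      exact mul_ne_zero hfx hgx (h (f * g) ⟨f, hf, g, hg, rfl⟩)

/-- A finite union of Zariski closed sets is Zariski closed. -/
lemma isZariskiClosed_finset_biUnion {k V : Type*} [Field k] [AddCommGroup V]
    [Module k V] (s : Finset k) (C : k → Set V) (hC : ∀ c, IsZariskiClosed k (C c)) :
    IsZariskiClosed k (⋃ c ∈ s, C c) := by
  classical
  induction s using Finset.induction with
  | empty => simpa using isZariskiClosed_empty
  | @insert b t hb iht =>
    simpa [Finset.set_biUnion_insert] using (hC b).union iht

/-- An irreducible set covered by a finite union of Zariski closed sets is contained in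
one of them. -/
lemma IsZariskiIrreducible.subset_of_finset_union {k V : Type*} [Field k] [AddCommGroup V]
    [Module k V] {Z : Set V} (hirr : IsZariskiIrreducible k Z)
    (s : Finset k) (C : k → Set V) (hC : ∀ c, IsZariskiClosed k (C c))
    (hsub : Z ⊆ ⋃ c ∈ s, C c) : ∃ c ∈ s, Z ⊆ C c := by
  classical
  induction s using Finset.induction with
  | empty =>
    obtain ⟨z, hz⟩ := hirr.1
    simpa using hsub hz
  | @insert c s hc ih =>
    have hclosed : IsZariskiClosed k (⋃ b ∈ s, C b) :=
      isZariskiClosed_finset_biUnion s C hC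
    have := hirr.2 (C c) (⋃ b ∈ s, C b) (hC c) hclosed
      (by simpa [Finset.set_biUnion_insert] using hsub)
    rcases this with h | h
    · exact ⟨c, Finset.mem_insert_self c s, h⟩
    · obtain ⟨b, hb, hb'⟩ := ih h
      exact ⟨b, Finset.mem_insert_of_mem hb, hb'⟩

/-- Let `V` be a finite-dimensional vector space over an infinite
field `k` and `Z ⊆ V` a spanning subset which is a cone and is irreducible in the
Zariski topology.  If a linear endomorphism `φ` of `V` satisfies `φ(z) ∈ span{z}`
for every `z ∈ Z`, then `φ` is a scalar multiple of the identity. -/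
theorem endomorphism_preserving_irreducible_cone_is_scalar
    {k V : Type*} [Field k] [Infinite k] [AddCommGroup V] [Module k V]
    [FiniteDimensional k V]
    (Z : Set V) (hspan : Submodule.span k Z = ⊤)
    (hcone : ∀ c : k, ∀ z ∈ Z, c • z ∈ Z)
    (hirr : IsZariskiIrreducible k Z)
    (φ : V →ₗ[k] V) (hφ : ∀ z ∈ Z, φ z ∈ Submodule.span k {z}) :
    ∃ c : k, φ = c • LinearMap.id := by
  classical
  -- Degenerate case: every element of `Z` is zero.
  by_cases htriv : ∀ z ∈ Z, z = (0 : V)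
  · have : Submodule.span k Z ≤ (⊥ : Submodule k V) := by
      rw [Submodule.span_le]
      intro z hz
      simp [htriv z hz]
    have hV : (⊤ : Submodule k V) = ⊥ := le_antisymm (hspan ▸ this) bot_le
    have hz : ∀ x : V, x = 0 := by
      intro x
      have hx : x ∈ (⊤ : Submodule k V) := Submodule.mem_top
      rw [hV] at hx
      simpa using hx
    exact ⟨0, by ext x; simp [hz (φ x), hz x]⟩
  push_neg at htriv
  obtain ⟨z₀, hz₀Z, hz₀⟩ := htriv
  -- `z₀` gives at least one eigenvalue.
  obtain ⟨c₀, hc₀⟩ := Submodule.mem_span_singleton.mp (hφ z₀ hz₀Z)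
  set ψ : Module.End k V := φ
  have heig₀ : ψ.HasEigenvalue c₀ :=
    Module.End.hasEigenvalue_of_hasEigenvector
      ⟨Module.End.mem_eigenspace_iff.mpr hc₀.symm, hz₀⟩
  have hfin : (Set.Finite ψ.HasEigenvalue) := ψ.finite_hasEigenvalue
  set s : Finset k := hfin.toFinset
  have hc₀s : c₀ ∈ s := hfin.mem_toFinset.mpr heig₀
  -- Each eigenspace condition defines a Zariski closed set, and they cover `Z`.
  set C : k → Set V := fun c => {x : V | (φ - c • (LinearMap.id : V →ₗ[k] V)) x = 0}
  have hCclosed : ∀ c, IsZariskiClosed k (C c) := fun c =>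
    isZariskiClosed_ker (φ - c • (LinearMap.id : V →ₗ[k] V))
  have hcover : Z ⊆ ⋃ c ∈ s, C c := by
    intro z hz
    by_cases hz0 : z = 0
    · exact Set.mem_biUnion hc₀s (by simp [C, hz0])
    · obtain ⟨c, hc⟩ := Submodule.mem_span_singleton.mp (hφ z hz)
      have heig : ψ.HasEigenvalue c :=
        Module.End.hasEigenvalue_of_hasEigenvector
          ⟨Module.End.mem_eigenspace_iff.mpr hc.symm, hz0⟩
      refine Set.mem_biUnion (hfin.mem_toFinset.mpr heig) ?_
      simp [C, ← hc, sub_eq_zero]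
      exact hc.symm
  obtain ⟨c, _, hZc⟩ := hirr.subset_of_finset_union s C hCclosed hcover
  refine ⟨c, ?_⟩
  have hker : Submodule.span k Z ≤ LinearMap.ker (φ - c • LinearMap.id) := by
    rw [Submodule.span_le]
    intro z hz
    exact LinearMap.mem_ker.mpr (hZc hz)
  rw [hspan, top_le_iff, LinearMap.ker_eq_top] at hker
  exact sub_eq_zero.mp hker
end
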